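/- For an integer N ≥ 2, let A_N denote the commutative ℂ-algebra ℂ[X, Y]/(X^{2N+1} − 4X, X·Y, Y² − X^{2N} + 4). Then A_N is isomorphic as a ℂ-algebra to the product algebra ℂ^{2N+2} (i.e. the algebra of functions Fin(2N+2) → ℂ with pointwise operations). -/

import Mathlib

/-- The ideal `(X^{2N+1} − 4X, XY, Y² − X^{2N} + 4)` presenting the quantum cohomology
ring of the even quadric `Q_{2N}` specialized at the origin. -/
noncomputable def quadricIdeal (N : ℕ) : Ideal (MvPolynomial (Fin 2) ℂ) :=
  Ideal.span
    { (MvPolynomial.X 0) ^ (2*N+1) - 4 * MvPolynomial.X 0,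
      MvPolynomial.X 0 * MvPolynomial.X 1,
      (MvPolynomial.X 1) ^ 2 - (MvPolynomial.X 0) ^ (2*N) + 4 }

noncomputable section
namespace QuadricAux
open MvPolynomial Complex

/-! ### The `2N+2` points of the variety -/

/-- positive real `2N`-th root of `4`, as a complex number -/
def rt (N : ℕ) : ℂ := Complex.exp ((Real.log 4 : ℂ) / ((2*N : ℕ) : ℂ))

/-- a primitive `2N`-th root of unity -/
def ζ (N : ℕ) : ℂ := Complex.exp (2 * (Real.pi : ℂ) * Complex.I / ((2*N : ℕ) : ℂ))

/-- the `2N`-th roots of `4` -/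
def xv (N k : ℕ) : ℂ := rt N * ζ N ^ k

lemma zeta_prim {N : ℕ} (hN : 0 < N) : IsPrimitiveRoot (ζ N) (2*N) :=
  Complex.isPrimitiveRoot_exp _ (by omega)

lemma rt_pow {N : ℕ} (hN : 0 < N) : rt N ^ (2*N) = 4 := by
  rw [rt, ← Complex.exp_nat_mul, mul_div_cancel₀]
  · rw [← Complex.ofReal_exp, Real.exp_log (by norm_num)]; norm_num
  · exact Nat.cast_ne_zero.mpr (by omega)

lemma rt_ne_zero (N : ℕ) : rt N ≠ 0 := Complex.exp_ne_zero _

lemma xv_pow {N : ℕ} (hN : 0 < N) (k : ℕ) : xv N k ^ (2*N) = 4 := by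
  rw [xv, mul_pow, rt_pow hN, ← pow_mul, mul_comm k, pow_mul, (zeta_prim hN).pow_eq_one,
    one_pow, mul_one]

lemma xv_ne_zero (N k : ℕ) : xv N k ≠ 0 :=
  mul_ne_zero (rt_ne_zero N) (pow_ne_zero _ (Complex.exp_ne_zero _))

lemma xv_inj {N : ℕ} (hN : 0 < N) {i j : ℕ} (hi : i < 2*N) (hj : j < 2*N)
    (h : xv N i = xv N j) : i = j := by
  apply (zeta_prim hN).pow_inj hi hj
  exact mul_left_cancel₀ (rt_ne_zero N) h

/-- the `2N+2` points of the variety -/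
def pts (N : ℕ) (k : Fin (2*N+2)) : Fin 2 → ℂ :=
  if (k : ℕ) < 2*N then ![xv N k, 0]
  else if (k : ℕ) = 2*N then ![0, 2*Complex.I] else ![0, -2*Complex.I]

lemma pts_lt {N : ℕ} {k : Fin (2*N+2)} (h : (k:ℕ) < 2*N) : pts N k = ![xv N k, 0] := by
  simp [pts, h]

lemma pts_eq {N : ℕ} {k : Fin (2*N+2)} (h : (k:ℕ) = 2*N) : pts N k = ![0, 2*Complex.I] := by
  simp [pts, h]

lemma pts_gt {N : ℕ} {k : Fin (2*N+2)} (h : 2*N < (k:ℕ)) : pts N k = ![0, -2*Complex.I] := by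
  rw [pts, if_neg h.not_gt, if_neg (by omega : ¬ (k:ℕ) = 2*N)]

def gen1 (N : ℕ) : MvPolynomial (Fin 2) ℂ := (X 0) ^ (2*N+1) - 4 * X 0
def gen2 : MvPolynomial (Fin 2) ℂ := X 0 * X 1
def gen3 (N : ℕ) : MvPolynomial (Fin 2) ℂ := (X 1) ^ 2 - (X 0) ^ (2*N) + 4

lemma aeval_gen1 {N : ℕ} (hN : 0 < N) (k : Fin (2*N+2)) : aeval (pts N k) (gen1 N) = 0 := by
  rcases lt_trichotomy (k : ℕ) (2*N) with h | h | h
  · rw [gen1]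
    simp only [pts_lt h, map_sub, map_pow, map_mul, aeval_X, map_ofNat, Matrix.cons_val_zero]
    rw [pow_succ, xv_pow hN]; ring
  · rw [gen1]; simp [pts_eq h, zero_pow]
  · rw [gen1]; simp [pts_gt h, zero_pow]

lemma aeval_gen2 {N : ℕ} (k : Fin (2*N+2)) : aeval (pts N k) gen2 = 0 := by
  rcases lt_trichotomy (k : ℕ) (2*N) with h | h | h
  · simp [gen2, pts_lt h]
  · simp [gen2, pts_eq h]
  · simp [gen2, pts_gt h]

lemma aeval_gen3 {N : ℕ} (hN : 0 < N) (k : Fin (2*N+2)) : aeval (pts N k) (gen3 N) = 0 := by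
  have h2N : 2*N ≠ 0 := by omega
  rcases lt_trichotomy (k : ℕ) (2*N) with h | h | h
  · rw [gen3]
    simp only [pts_lt h, map_add, map_sub, map_pow, aeval_X, map_ofNat, Matrix.cons_val_zero,
      Matrix.cons_val_one, Matrix.head_cons]
    rw [xv_pow hN, zero_pow (two_ne_zero)]; ring
  · rw [gen3]
    simp only [pts_eq h, map_add, map_sub, map_pow, aeval_X, map_ofNat, Matrix.cons_val_zero,
      Matrix.cons_val_one, Matrix.head_cons]
    rw [zero_pow h2N, mul_pow, Complex.I_sq]; ring
  · rw [gen3]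
    simp only [pts_gt h, map_add, map_sub, map_pow, aeval_X, map_ofNat, Matrix.cons_val_zero,
      Matrix.cons_val_one, Matrix.head_cons]
    rw [zero_pow h2N, neg_mul, neg_pow, mul_pow, Complex.I_sq]; ring

/-! ### The evaluation map and its surjectivity -/

/-- simultaneous evaluation at the `2N+2` points -/
def φ (N : ℕ) : MvPolynomial (Fin 2) ℂ →ₐ[ℂ] (Fin (2*N+2) → ℂ) :=
  Pi.algHom ℂ _ (fun k => aeval (pts N k))

/-- nodes for Lagrange interpolation in the `X` variable -/
def w (N : ℕ) (j : Fin (2*N+1)) : ℂ := if (j:ℕ) < 2*N then xv N j else 0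

lemma w_injOn {N : ℕ} (hN : 0 < N) :
    Set.InjOn (w N) ↑(Finset.univ : Finset (Fin (2*N+1))) := by
  intro a _ b _ hab
  by_cases ha : (a:ℕ) < 2*N <;> by_cases hb : (b:ℕ) < 2*N <;>
    simp only [w, ha, hb, if_true, if_false] at hab
  · exact Fin.ext (xv_inj hN ha hb hab)
  · exact absurd hab (xv_ne_zero N a)
  · exact absurd hab.symm (xv_ne_zero N b)
  · have := a.isLt; have := b.isLt; exact Fin.ext (by omega)

/-- nodes for Lagrange interpolation in the `Y` variable -/
def u : Fin 3 → ℂ := ![0, 2*Complex.I, -2*Complex.I]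

lemma u_injOn : Set.InjOn u ↑(Finset.univ : Finset (Fin 3)) := by
  have hI := Complex.I_ne_zero
  intro a _ b _ hab
  fin_cases a <;> fin_cases b <;> simp_all [u, Complex.ext_iff] <;> norm_num at hab

lemma phi_aeval_X0 {N : ℕ} (L : Polynomial ℂ) (j : Fin (2*N+2)) :
    φ N (Polynomial.aeval (X 0 : MvPolynomial (Fin 2) ℂ) L) j
      = Polynomial.eval (pts N j 0) L := by
  show aeval (pts N j) (Polynomial.aeval (X 0) L) = _
  rw [← Polynomial.aeval_algHom_apply, aeval_X, Polynomial.coe_aeval_eq_eval]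

lemma phi_aeval_X1 {N : ℕ} (L : Polynomial ℂ) (j : Fin (2*N+2)) :
    φ N (Polynomial.aeval (X 1 : MvPolynomial (Fin 2) ℂ) L) j
      = Polynomial.eval (pts N j 1) L := by
  show aeval (pts N j) (Polynomial.aeval (X 1) L) = _
  rw [← Polynomial.aeval_algHom_apply, aeval_X, Polynomial.coe_aeval_eq_eval]

lemma exists_indicator {N : ℕ} (hN : 0 < N) (k : Fin (2*N+2)) :
    ∃ e : MvPolynomial (Fin 2) ℂ, φ N e = Pi.single k 1 := by
  rcases lt_trichotomy (k : ℕ) (2*N) with hk | hk | hk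
  · -- use Lagrange basis in X at node k
    refine ⟨Polynomial.aeval (X 0)
      (Lagrange.basis Finset.univ (w N) ⟨(k:ℕ), by omega⟩), funext fun j => ?_⟩
    rw [phi_aeval_X0]
    rcases lt_trichotomy (j : ℕ) (2*N) with hj | hj | hj
    · rw [pts_lt hj, Matrix.cons_val_zero]
      have hxw : xv N j = w N ⟨(j:ℕ), by omega⟩ := by simp [w, hj]
      rw [hxw]
      by_cases hjk : j = k
      · subst hjk
        rw [Lagrange.eval_basis_self (w_injOn hN) (Finset.mem_univ _), Pi.single_apply,
          if_pos rfl]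
      · rw [Lagrange.eval_basis_of_ne (by simp [Fin.ext_iff]; omega
            : (⟨(k:ℕ), by omega⟩ : Fin (2*N+1)) ≠ ⟨(j:ℕ), by omega⟩) (Finset.mem_univ _),
          Pi.single_apply, if_neg hjk]
    · rw [pts_eq hj, Matrix.cons_val_zero]
      have h0 : (0:ℂ) = w N ⟨2*N, by omega⟩ := by simp [w]
      rw [h0, Lagrange.eval_basis_of_ne (by simp [Fin.ext_iff]; omega) (Finset.mem_univ _),
        Pi.single_apply, if_neg (by intro h; subst h; omega)]
    · rw [pts_gt hj, Matrix.cons_val_zero]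
      have h0 : (0:ℂ) = w N ⟨2*N, by omega⟩ := by simp [w]
      rw [h0, Lagrange.eval_basis_of_ne (by simp [Fin.ext_iff]; omega) (Finset.mem_univ _),
        Pi.single_apply, if_neg (by intro h; subst h; omega)]
  · -- the point (0, 2i) : Lagrange basis in Y at node 1
    refine ⟨Polynomial.aeval (X 1) (Lagrange.basis Finset.univ u 1), funext fun j => ?_⟩
    rw [phi_aeval_X1]
    rcases lt_trichotomy (j : ℕ) (2*N) with hj | hj | hj
    · rw [pts_lt hj, Matrix.cons_val_one, Matrix.cons_val_zero]
      have h0 : (0:ℂ) = u 0 := by simp [u]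
      rw [h0, Lagrange.eval_basis_of_ne (by decide) (Finset.mem_univ _),
        Pi.single_apply, if_neg (by intro h; subst h; omega)]
    · rw [pts_eq hj, Matrix.cons_val_one, Matrix.cons_val_zero]
      have h0 : 2*Complex.I = u 1 := by simp [u]
      have hjk : j = k := Fin.ext (by omega)
      rw [h0, Lagrange.eval_basis_self u_injOn (Finset.mem_univ _),
        Pi.single_apply, if_pos hjk]
    · rw [pts_gt hj, Matrix.cons_val_one, Matrix.cons_val_zero]
      have h0 : -2*Complex.I = u 2 := by simp [u]
      rw [h0, Lagrange.eval_basis_of_ne (by decide) (Finset.mem_univ _),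
        Pi.single_apply, if_neg (by intro h; subst h; omega)]
  · -- the point (0, -2i) : Lagrange basis in Y at node 2
    refine ⟨Polynomial.aeval (X 1) (Lagrange.basis Finset.univ u 2), funext fun j => ?_⟩
    rw [phi_aeval_X1]
    rcases lt_trichotomy (j : ℕ) (2*N) with hj | hj | hj
    · rw [pts_lt hj, Matrix.cons_val_one, Matrix.cons_val_zero]
      have h0 : (0:ℂ) = u 0 := by simp [u]
      rw [h0, Lagrange.eval_basis_of_ne (by decide) (Finset.mem_univ _),
        Pi.single_apply, if_neg (by intro h; subst h; omega)]
    · rw [pts_eq hj, Matrix.cons_val_one, Matrix.cons_val_zero]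
      have h0 : 2*Complex.I = u 1 := by simp [u]
      rw [h0, Lagrange.eval_basis_of_ne (by decide) (Finset.mem_univ _),
        Pi.single_apply, if_neg (by intro h; subst h; omega)]
    · rw [pts_gt hj, Matrix.cons_val_one, Matrix.cons_val_zero]
      have h0 : -2*Complex.I = u 2 := by simp [u]
      have hjk : j = k := Fin.ext (by have := j.isLt; have := k.isLt; omega)
      rw [h0, Lagrange.eval_basis_self u_injOn (Finset.mem_univ _),
        Pi.single_apply, if_pos hjk]

lemma phi_surjective {N : ℕ} (hN : 0 < N) : Function.Surjective (φ N) := by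
  intro v
  choose e he using fun k => exists_indicator hN k
  refine ⟨∑ k, v k • e k, ?_⟩
  rw [map_sum]
  funext j
  simp only [Finset.sum_apply, map_smul, he, Pi.smul_apply, Pi.single_apply, smul_eq_mul]
  simp [Finset.sum_ite_eq' Finset.univ j v]

/-! ### The quotient is spanned by `1, x, …, x^{2N}, y` -/

abbrev A (N : ℕ) := MvPolynomial (Fin 2) ℂ ⧸ quadricIdeal N

def mkq (N : ℕ) : MvPolynomial (Fin 2) ℂ →ₐ[ℂ] A N := Ideal.Quotient.mkₐ ℂ (quadricIdeal N)

def xq (N : ℕ) : A N := mkq N (X 0)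
def yq (N : ℕ) : A N := mkq N (X 1)

lemma rel1 (N : ℕ) : xq N ^ (2*N+1) = 4 * xq N := by
  have h0 : mkq N ((X 0 : MvPolynomial (Fin 2) ℂ) ^ (2*N+1) - 4 * X 0) = 0 := by
    rw [mkq, Ideal.Quotient.mkₐ_eq_mk, Ideal.Quotient.eq_zero_iff_mem]
    exact Ideal.subset_span (by simp)
  rw [map_sub, map_pow, map_mul, map_ofNat] at h0
  show mkq N (X 0) ^ (2*N+1) = 4 * mkq N (X 0)
  linear_combination h0

lemma rel2 (N : ℕ) : xq N * yq N = 0 := by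
  have h0 : mkq N ((X 0 : MvPolynomial (Fin 2) ℂ) * X 1) = 0 := by
    rw [mkq, Ideal.Quotient.mkₐ_eq_mk, Ideal.Quotient.eq_zero_iff_mem]
    exact Ideal.subset_span (by simp)
  rw [map_mul] at h0
  exact h0

lemma rel3 (N : ℕ) : yq N ^ 2 = xq N ^ (2*N) - 4 := by
  have h0 : mkq N ((X 1 : MvPolynomial (Fin 2) ℂ) ^ 2 - (X 0) ^ (2*N) + 4) = 0 := by
    rw [mkq, Ideal.Quotient.mkₐ_eq_mk, Ideal.Quotient.eq_zero_iff_mem]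
    exact Ideal.subset_span (by simp)
  rw [map_add, map_sub, map_pow, map_pow, map_ofNat] at h0
  show mkq N (X 1) ^ 2 = mkq N (X 0) ^ (2*N) - 4
  linear_combination h0

/-- the spanning family: `1, x, …, x^{2N}, y` -/
def vbas (N : ℕ) (i : Fin (2*N+2)) : A N := if (i:ℕ) ≤ 2*N then xq N ^ (i:ℕ) else yq N

lemma span_vbas_top {N : ℕ} (hN : 0 < N) : Submodule.span ℂ (Set.range (vbas N)) = ⊤ := by
  set M := Submodule.span ℂ (Set.range (vbas N)) with hM
  have hxmem : ∀ i : ℕ, i ≤ 2*N → xq N ^ i ∈ M := by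
    intro i hi
    exact Submodule.subset_span ⟨⟨i, by omega⟩, by simp [vbas, hi]⟩
  have hymem : yq N ∈ M :=
    Submodule.subset_span ⟨⟨2*N+1, by omega⟩, by simp [vbas]⟩
  have h4 : (4 : A N) = (4:ℂ) • (1 : A N) := by
    rw [← Algebra.algebraMap_eq_smul_one, map_ofNat]
  -- closure under multiplication by x
  have hmulx : ∀ m ∈ M, m * xq N ∈ M := by
    intro m hm
    refine Submodule.span_induction (fun z hz => ?_) (by simp) ?_ ?_ hm
    · obtain ⟨i, rfl⟩ := hz
      by_cases hi : (i:ℕ) ≤ 2*N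
      · rw [vbas, if_pos hi, ← pow_succ]
        rcases lt_or_eq_of_le hi with h | h
        · exact hxmem ((i:ℕ)+1) (by omega)
        · rw [h, rel1 N, h4, smul_mul_assoc, one_mul]
          simpa using M.smul_mem (4:ℂ) (by simpa using hxmem 1 (by omega))
      · rw [vbas, if_neg hi, mul_comm, rel2 N]
        exact zero_mem M
    · intro a b _ _ ha hb
      rw [add_mul]; exact add_mem ha hb
    · intro c a _ ha
      rw [smul_mul_assoc]; exact M.smul_mem c ha
  -- closure under multiplication by y
  have hmuly : ∀ m ∈ M, m * yq N ∈ M := by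
    intro m hm
    refine Submodule.span_induction (fun z hz => ?_) (by simp) ?_ ?_ hm
    · obtain ⟨i, rfl⟩ := hz
      by_cases hi : (i:ℕ) ≤ 2*N
      · rw [vbas, if_pos hi]
        rcases Nat.eq_zero_or_pos (i:ℕ) with h | h
        · rw [h, pow_zero, one_mul]; exact hymem
        · obtain ⟨i', hi'⟩ : ∃ i', (i:ℕ) = i' + 1 := ⟨(i:ℕ)-1, by omega⟩
          rw [hi', pow_succ, mul_assoc, rel2 N, mul_zero]
          exact zero_mem M
      · rw [vbas, if_neg hi, ← sq, rel3 N, h4]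
        exact sub_mem (hxmem _ le_rfl) (M.smul_mem _ (by simpa using hxmem 0 (by omega)))
    · intro a b _ _ ha hb
      rw [add_mul]; exact add_mem ha hb
    · intro c a _ ha
      rw [smul_mul_assoc]; exact M.smul_mem c ha
  rw [eq_top_iff]
  rintro z -
  obtain ⟨p, rfl⟩ := Ideal.Quotient.mkₐ_surjective ℂ (quadricIdeal N) z
  induction p using MvPolynomial.induction_on with
  | C a =>
    have : (Ideal.Quotient.mkₐ ℂ (quadricIdeal N)) (C a) = a • (1 : A N) := by
      rw [← MvPolynomial.algebraMap_eq, AlgHom.commutes, Algebra.algebraMap_eq_smul_one]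
    rw [this]
    exact M.smul_mem a (by simpa using hxmem 0 (by omega))
  | add p q hp hq =>
    rw [map_add]; exact add_mem hp hq
  | mul_X p n hp =>
    rw [map_mul]
    fin_cases n
    · exact hmulx _ hp
    · exact hmuly _ hp

end QuadricAux
end

open QuadricAux in
/-- For `N ≥ 2`, the algebra
`A_N = ℂ[X,Y]/(X^{2N+1} − 4X, XY, Y² − X^{2N} + 4)` is isomorphic as a `ℂ`-algebra to the
product algebra `ℂ^{2N+2}` (semisimplicity of the specialized quantum cohomology of
`Q_{2N}`, Corollary 6.2 of the paper). -/
theorem stmt_6 (N : ℕ) (hN : 2 ≤ N) :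
    Nonempty ((MvPolynomial (Fin 2) ℂ ⧸ quadricIdeal N) ≃ₐ[ℂ] (Fin (2*N+2) → ℂ)) := by
  classical
  have hN0 : 0 < N := by omega
  -- the ideal is contained in the kernel of the evaluation map
  have hker : ∀ a ∈ quadricIdeal N, φ N a = 0 := by
    intro a ha
    have hle : quadricIdeal N ≤ RingHom.ker (φ N) := by
      rw [quadricIdeal, Ideal.span_le]
      rintro g hg
      simp only [Set.mem_insert_iff, Set.mem_singleton_iff] at hg
      have hg0 : φ N g = 0 := by
        rcases hg with rfl | rfl | rfl
        · exact funext fun k => aeval_gen1 hN0 k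
        · exact funext fun k => aeval_gen2 k
        · exact funext fun k => aeval_gen3 hN0 k
      simpa [RingHom.mem_ker] using hg0
    exact RingHom.mem_ker.mp (hle ha)
  let φ' : (MvPolynomial (Fin 2) ℂ ⧸ quadricIdeal N) →ₐ[ℂ] (Fin (2*N+2) → ℂ) :=
    Ideal.Quotient.liftₐ (quadricIdeal N) (φ N) hker
  have hsurj : Function.Surjective φ' := by
    intro v
    obtain ⟨e, he⟩ := phi_surjective hN0 v
    refine ⟨Ideal.Quotient.mk _ e, ?_⟩
    show (φ N) e = v
    exact he
  haveI hfin : Module.Finite ℂ (A N) :=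
    ⟨Submodule.fg_def.mpr ⟨Set.range (vbas N), Set.finite_range _, span_vbas_top hN0⟩⟩
  have h2 : Module.finrank ℂ (Fin (2*N+2) → ℂ) = 2*N+2 := by
    simp [Module.finrank_pi]
  have h1 : Module.finrank ℂ (A N) ≤ 2*N+2 := by
    simpa using finrank_le_of_span_eq_top (span_vbas_top hN0)
  have h3 : 2*N+2 ≤ Module.finrank ℂ (A N) := by
    have hr := LinearMap.finrank_range_le φ'.toLinearMap
    rw [LinearMap.range_eq_top.mpr (by exact hsurj), finrank_top, h2] at hr
    exact hr
  have heq : Module.finrank ℂ (A N) = Module.finrank ℂ (Fin (2*N+2) → ℂ) := by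
    rw [h2]; omega
  have hinj : Function.Injective φ' :=
    (LinearMap.injective_iff_surjective_of_finrank_eq_finrank
      (f := φ'.toLinearMap) heq).mpr hsurj
  exact ⟨AlgEquiv.ofBijective φ' ⟨hinj, hsurj⟩⟩
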